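/- arXiv:2310.09712 — 5 statements merged into one kernel-verified Lean document; each statement's English description precedes it below -/
import Mathlib

section
/- Let k_x, k_z, k_1, k_2, k_3 > 0 and set θ* := k_3/(k_1 + k_3) and ε* := k_x·k_z/(k_1·k_3 + k_x·k_2). Then for every ε ∈ (0, ε*) there exists λ > 0 such that for all a, b ≥ 0: (1 − θ*)·(−k_x·a² + k_3·a·b) + θ*·(k_1·a·b + k_2·b² − (k_z/ε)·b²) ≤ −λ·(a² + b²). -/
/-- the composite quadratic-form estimate underlying the Lyapunov flow
analysis: with `θ* = k₃/(k₁+k₃)` and `ε* = kₓk_z/(k₁k₃ + kₓk₂)`, for every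
`ε ∈ (0, ε*)` there is `λ > 0` such that for all `a, b ≥ 0`,
`(1-θ*)(-kₓ a² + k₃ a b) + θ*(k₁ a b + k₂ b² - (k_z/ε) b²) ≤ -λ (a² + b²)`. -/
theorem composite_quadratic_estimate
    (kx kz k1 k2 k3 : ℝ)
    (hkx : 0 < kx) (hkz : 0 < kz) (hk1 : 0 < k1) (hk2 : 0 < k2) (hk3 : 0 < k3) :
    ∀ ε : ℝ, 0 < ε → ε < kx * kz / (k1 * k3 + kx * k2) →
      ∃ lam : ℝ, 0 < lam ∧ ∀ a b : ℝ, 0 ≤ a → 0 ≤ b →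
        (1 - k3 / (k1 + k3)) * (-(kx * a ^ 2) + k3 * a * b)
          + (k3 / (k1 + k3)) * (k1 * a * b + k2 * b ^ 2 - (kz / ε) * b ^ 2)
        ≤ -lam * (a ^ 2 + b ^ 2) := by
  intro ε hε hε'
  have hK : (0:ℝ) < k1 + k3 := by linarith
  set u : ℝ := kz / ε with hu
  have hdenom : (0:ℝ) < k1 * k3 + kx * k2 := by positivity
  have hεd : ε * (k1 * k3 + kx * k2) < kx * kz := by
    rw [lt_div_iff₀ hdenom] at hε'; linarith
  have hku : k1 * k3 + kx * k2 < kx * u := by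
    rw [hu, ← mul_div_assoc, lt_div_iff₀ hε]
    nlinarith
  have hu2 : k2 < u := by nlinarith
  set A : ℝ := k1 * kx with hA
  set B : ℝ := k3 * (u - k2) with hB
  set D : ℝ := k1 * k3 * (kx * u - kx * k2 - k1 * k3) with hD
  have hApos : 0 < A := by positivity
  have hBpos : 0 < B := by rw [hB]; nlinarith
  have hS : 0 < A + B := by linarith
  have hδ : 0 < kx * u - kx * k2 - k1 * k3 := by linarith
  have hDpos : 0 < D := by rw [hD]; exact mul_pos (mul_pos hk1 hk3) hδ
  refine ⟨D / ((A + B) * (k1 + k3)), by positivity, ?_⟩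
  intro a b ha hb
  have key : D * (a ^ 2 + b ^ 2) ≤ (A + B) * (A * a ^ 2 - 2 * (k1 * k3) * a * b + B * b ^ 2) := by
    rw [hA, hB, hD]
    nlinarith [sq_nonneg (k1 * kx * a - k1 * k3 * b), sq_nonneg (k3 * (u - k2) * b - k1 * k3 * a)]
  have e1 : (1 - k3 / (k1 + k3)) * (-(kx * a ^ 2) + k3 * a * b)
      + (k3 / (k1 + k3)) * (k1 * a * b + k2 * b ^ 2 - u * b ^ 2)
      = (-(A * a ^ 2 - 2 * (k1 * k3) * a * b + B * b ^ 2)) / (k1 + k3) := by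
    field_simp; ring
  rw [e1]
  rw [div_le_iff₀ hK]
  have e2 : -(D / ((A + B) * (k1 + k3))) * (a ^ 2 + b ^ 2) * (k1 + k3)
      = (-(D * (a ^ 2 + b ^ 2))) / (A + B) := by
    field_simp
  rw [e2, le_div_iff₀ hS]
  nlinarith [key]
end

section
/- Let k_1, k_3, k_4, c_x > 0 satisfy k_3·k_4/k_1 < c_x, and set θ* := k_3/(k_1 + k_3) and λ := (k_1·c_x − k_3·k_4)/(k_1 + k_3). Let μ be a Borel probability measure on ℝ^m, let V : ℝ^{n1} → ℝ and W : ℝ^{n1} × ℝ^{n2} → ℝ, fix (x,z) ∈ ℝ^{n1} × ℝ^{n2} and r ≥ 0, and let S : ℝ^m → Set(ℝ^{n1} × ℝ^{n2}) be such that for every v, S(v) is nonempty and both g ↦ V(g₁) and g ↦ W(g) are bounded above on S(v). Suppose the functions v ↦ sup_{g∈S(v)} V(g₁), v ↦ sup_{g∈S(v)} W(g), and v ↦ sup_{g∈S(v)} [(1−θ*)V(g₁) + θ*W(g)] are μ-integrable, and that ∫ sup_{g∈S(v)} V(g₁) dμ(v) ≤ V(x) − c_x·r and ∫ sup_{g∈S(v)}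 W(g) dμ(v) ≤ W(x,z) + k_4·r. Then λ > 0 and ∫ sup_{g∈S(v)} [(1−θ*)V(g₁) + θ*W(g)] dμ(v) ≤ (1−θ*)V(x) + θ*W(x,z) − λ·r. -/
open MeasureTheory

/-- expected-jump decrease estimate for the composite Foster function
`E_{θ*} = (1-θ*)V + θ*W`, in the slow-dominant case `k₃k₄/k₁ < cₓ`, with
`θ* = k₃/(k₁+k₃)` and `λ = (k₁cₓ - k₃k₄)/(k₁+k₃)`. -/
theorem composite_expected_jump_decrease_slow
    (m n1 n2 : ℕ)
    (k1 k3 k4 cx : ℝ)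
    (hk1 : 0 < k1) (hk3 : 0 < k3) (hk4 : 0 < k4) (hcx : 0 < cx)
    (hgap : k3 * k4 / k1 < cx)
    (μ : Measure (EuclideanSpace ℝ (Fin m))) [IsProbabilityMeasure μ]
    (V : EuclideanSpace ℝ (Fin n1) → ℝ)
    (W : EuclideanSpace ℝ (Fin n1) × EuclideanSpace ℝ (Fin n2) → ℝ)
    (x : EuclideanSpace ℝ (Fin n1)) (z : EuclideanSpace ℝ (Fin n2))
    (r : ℝ) (hr : 0 ≤ r)
    (S : EuclideanSpace ℝ (Fin m) →
      Set (EuclideanSpace ℝ (Fin n1) × EuclideanSpace ℝ (Fin n2)))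
    (hS_ne : ∀ v, (S v).Nonempty)
    (hV_bdd : ∀ v, BddAbove ((fun g => V g.1) '' S v))
    (hW_bdd : ∀ v, BddAbove ((fun g => W g) '' S v))
    (hV_int : Integrable (fun v => sSup ((fun g => V g.1) '' S v)) μ)
    (hW_int : Integrable (fun v => sSup ((fun g => W g) '' S v)) μ)
    (hE_int : Integrable (fun v => sSup
      ((fun g => (1 - k3 / (k1 + k3)) * V g.1 + (k3 / (k1 + k3)) * W g) '' S v)) μ)
    (hV_dec : ∫ v, sSup ((fun g => V g.1) '' S v) ∂μ ≤ V x - cx * r)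
    (hW_inc : ∫ v, sSup ((fun g => W g) '' S v) ∂μ ≤ W (x, z) + k4 * r) :
    0 < (k1 * cx - k3 * k4) / (k1 + k3) ∧
    ∫ v, sSup ((fun g => (1 - k3 / (k1 + k3)) * V g.1
        + (k3 / (k1 + k3)) * W g) '' S v) ∂μ
      ≤ (1 - k3 / (k1 + k3)) * V x + (k3 / (k1 + k3)) * W (x, z)
        - ((k1 * cx - k3 * k4) / (k1 + k3)) * r := by

  have hsum : 0 < k1 + k3 := by linarith
  have hθ : 0 < k3 / (k1 + k3) := div_pos hk3 hsum
  have hθ1 : k3 / (k1 + k3) < 1 := (div_lt_one hsum).2 (by linarith)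
  have ha : (0:ℝ) ≤ 1 - k3 / (k1 + k3) := by linarith
  have hb : (0:ℝ) ≤ k3 / (k1 + k3) := le_of_lt hθ
  have hlam : 0 < (k1 * cx - k3 * k4) / (k1 + k3) := by
    apply div_pos _ hsum
    have := (div_lt_iff₀ hk1).1 hgap
    nlinarith
  refine ⟨hlam, ?_⟩
  set a := 1 - k3 / (k1 + k3) with ha_def
  set b := k3 / (k1 + k3) with hb_def
  have hpt : ∀ v, sSup ((fun g => a * V g.1 + b * W g) '' S v)
      ≤ a * sSup ((fun g => V g.1) '' S v) + b * sSup ((fun g => W g) '' S v) := by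
    intro v
    apply csSup_le ((hS_ne v).image _)
    rintro y ⟨g, hg, rfl⟩
    show a * V g.1 + b * W g ≤ _
    have h1 : V g.1 ≤ sSup ((fun g => V g.1) '' S v) :=
      le_csSup (hV_bdd v) ⟨g, hg, rfl⟩
    have h2 : W g ≤ sSup ((fun g => W g) '' S v) :=
      le_csSup (hW_bdd v) ⟨g, hg, rfl⟩
    have := mul_le_mul_of_nonneg_left h1 ha
    have := mul_le_mul_of_nonneg_left h2 hb
    linarith
  have hint : ∫ v, sSup ((fun g => a * V g.1 + b * W g) '' S v) ∂μ
      ≤ ∫ v, (a * sSup ((fun g => V g.1) '' S v)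
            + b * sSup ((fun g => W g) '' S v)) ∂μ :=
    integral_mono hE_int ((hV_int.const_mul a).add (hW_int.const_mul b)) hpt
  rw [integral_add (hV_int.const_mul a) (hW_int.const_mul b),
      integral_const_mul, integral_const_mul] at hint
  have hV' := mul_le_mul_of_nonneg_left hV_dec ha
  have hW' := mul_le_mul_of_nonneg_left hW_inc hb
  have hkey : a * (V x - cx * r) + b * (W (x, z) + k4 * r)
      = a * V x + b * W (x, z) - ((k1 * cx - k3 * k4) / (k1 + k3)) * r := by
    have hane : a = k1 / (k1 + k3) := by
      show 1 - k3 / (k1 + k3) = k1 / (k1 + k3)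
      field_simp
      ring
    rw [hane, hb_def]
    field_simp
    ring
  exact hint.trans ((add_le_add hV' hW').trans_eq hkey)
end

section
/- Let k_1, k_3, k_5, c_z > 0 satisfy k_1·k_5/k_3 < c_z, and set θ* := k_3/(k_1 + k_3) and λ := (k_3·c_z − k_1·k_5)/(k_1 + k_3). Let μ be a Borel probability measure on ℝ^m, let V : ℝ^{n1} → ℝ and W : ℝ^{n1} × ℝ^{n2} → ℝ, fix (x,z) ∈ ℝ^{n1} × ℝ^{n2} and r ≥ 0, and let S : ℝ^m → Set(ℝ^{n1} × ℝ^{n2}) be such that for every v, S(v) is nonempty and both g ↦ V(g₁) and g ↦ W(g) are bounded above on S(v). Suppose the functions v ↦ sup_{g∈S(v)} V(g₁), v ↦ sup_{g∈S(v)} W(g), and v ↦ sup_{g∈S(v)} [(1−θ*)V(g₁) + θ*W(g)] are μ-integrable, and that ∫ sup_{g∈S(v)} V(g₁) dμ(v) ≤ V(x) + k_5·r and ∫ sup_{g∈S(v)} W(g) dμ(v) ≤ W(x,z) − c_z·r. Then λ > 0 and ∫ sup_{g∈S(v)} [(1−θ*)V(g₁) + θ*W(g)] dμ(v) ≤ (1−θ*)V(x)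 + θ*W(x,z) − λ·r. -/
open MeasureTheory

/-- expected-jump decrease estimate for the composite Foster function
`E_{θ*} = (1-θ*)V + θ*W`, in the fast-dominant case `k₁k₅/k₃ < c_z`, with
`θ* = k₃/(k₁+k₃)` and `λ = (k₃c_z - k₁k₅)/(k₁+k₃)`. -/
theorem composite_expected_jump_decrease_fast
    (m n1 n2 : ℕ)
    (k1 k3 k5 cz : ℝ)
    (hk1 : 0 < k1) (hk3 : 0 < k3) (hk5 : 0 < k5) (hcz : 0 < cz)
    (hgap : k1 * k5 / k3 < cz)
    (μ : Measure (EuclideanSpace ℝ (Fin m))) [IsProbabilityMeasure μ]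
    (V : EuclideanSpace ℝ (Fin n1) → ℝ)
    (W : EuclideanSpace ℝ (Fin n1) × EuclideanSpace ℝ (Fin n2) → ℝ)
    (x : EuclideanSpace ℝ (Fin n1)) (z : EuclideanSpace ℝ (Fin n2))
    (r : ℝ) (hr : 0 ≤ r)
    (S : EuclideanSpace ℝ (Fin m) →
      Set (EuclideanSpace ℝ (Fin n1) × EuclideanSpace ℝ (Fin n2)))
    (hS_ne : ∀ v, (S v).Nonempty)
    (hV_bdd : ∀ v, BddAbove ((fun g => V g.1) '' S v))
    (hW_bdd : ∀ v, BddAbove ((fun g => W g) '' S v))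
    (hV_int : Integrable (fun v => sSup ((fun g => V g.1) '' S v)) μ)
    (hW_int : Integrable (fun v => sSup ((fun g => W g) '' S v)) μ)
    (hE_int : Integrable (fun v => sSup
      ((fun g => (1 - k3 / (k1 + k3)) * V g.1 + (k3 / (k1 + k3)) * W g) '' S v)) μ)
    (hV_dec : ∫ v, sSup ((fun g => V g.1) '' S v) ∂μ ≤ V x + k5 * r)
    (hW_inc : ∫ v, sSup ((fun g => W g) '' S v) ∂μ ≤ W (x, z) - cz * r) :
    0 < (k3 * cz - k1 * k5) / (k1 + k3) ∧
    ∫ v, sSup ((fun g => (1 - k3 / (k1 + k3)) * V g.1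
        + (k3 / (k1 + k3)) * W g) '' S v) ∂μ
      ≤ (1 - k3 / (k1 + k3)) * V x + (k3 / (k1 + k3)) * W (x, z)
        - ((k3 * cz - k1 * k5) / (k1 + k3)) * r := by

  have hsum : 0 < k1 + k3 := by linarith
  set θ : ℝ := k3 / (k1 + k3) with hθ
  have hθpos : 0 < θ := div_pos hk3 hsum
  have hθlt : θ < 1 := by
    rw [hθ, div_lt_one hsum]; linarith
  have h1θ : 0 ≤ 1 - θ := by linarith
  have hlam : 0 < (k3 * cz - k1 * k5) / (k1 + k3) := by
    apply div_pos _ hsum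
    have := (div_lt_iff₀ hk3).mp hgap
    nlinarith
  refine ⟨hlam, ?_⟩
  have hpt : ∀ v, sSup ((fun g => (1 - θ) * V g.1 + θ * W g) '' S v)
      ≤ (1 - θ) * sSup ((fun g => V g.1) '' S v) + θ * sSup ((fun g => W g) '' S v) := by
    intro v
    apply csSup_le ((hS_ne v).image _)
    rintro y ⟨g, hg, rfl⟩
    have h1 : V g.1 ≤ sSup ((fun g => V g.1) '' S v) :=
      le_csSup (hV_bdd v) ⟨g, hg, rfl⟩
    have h2 : W g ≤ sSup ((fun g => W g) '' S v) :=
      le_csSup (hW_bdd v) ⟨g, hg, rfl⟩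
    have := mul_le_mul_of_nonneg_left h1 h1θ
    have := mul_le_mul_of_nonneg_left h2 hθpos.le
    simp only []
    linarith
  have hint : ∫ v, sSup ((fun g => (1 - θ) * V g.1 + θ * W g) '' S v) ∂μ
      ≤ ∫ v, ((1 - θ) * sSup ((fun g => V g.1) '' S v)
        + θ * sSup ((fun g => W g) '' S v)) ∂μ :=
    integral_mono hE_int ((hV_int.const_mul _).add (hW_int.const_mul _)) hpt
  rw [integral_add (hV_int.const_mul _) (hW_int.const_mul _),
    integral_const_mul, integral_const_mul] at hint
  have h3 := mul_le_mul_of_nonneg_left hV_dec h1θ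
  have h4 := mul_le_mul_of_nonneg_left hW_inc hθpos.le
  have key : (1 - θ) * (k5 * r) - θ * (cz * r)
      ≤ -((k3 * cz - k1 * k5) / (k1 + k3)) * r := by
    rw [hθ]
    have : (1 - k3 / (k1 + k3)) * (k5 * r) - k3 / (k1 + k3) * (cz * r)
        = -((k3 * cz - k1 * k5) / (k1 + k3)) * r := by
      field_simp
      ring
    linarith [this.le]
  calc ∫ v, sSup ((fun g => (1 - θ) * V g.1 + θ * W g) '' S v) ∂μ
      ≤ (1 - θ) * (V x + k5 * r) + θ * (W (x, z) - cz * r) := by linarith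
    _ ≤ (1 - θ) * V x + θ * W (x, z) - ((k3 * cz - k1 * k5) / (k1 + k3)) * r := by
        nlinarith [key]
end

section
/- Let C_x ⊆ ℝ^{n1} be closed, let M : ℝ^{n1} → Set(ℝ^{n2}) be locally bounded with closed graph and M(x) nonempty for all x ∈ C_x, and let F_x : ℝ^{n1} × ℝ^{n2} → Set(ℝ^{n1}) be locally bounded with closed graph and nonempty values. Define S(x) := { f ∈ ℝ^{n1} : ∃ z ∈ M(x), f ∈ F_x(x,z) } and F̃(x) := closure of the convex hull of S(x). Then for every x ∈ C_x, F̃(x) is nonempty, compact, and convex, and equals the convex hull of S(x); F̃ is locally bounded; and the restricted graph {(x,f) : x ∈ C_x, f ∈ F̃(x)} is closed in ℝ^{n1} × ℝ^{n1}. -/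
open Set Bornology Metric Filter

lemma sum_pad {β : Type*} [AddCommMonoid β] (m n : ℕ) (hmn : m ≤ n) (f : Fin m → β) :
    (∑ j : Fin n, if h : (j : ℕ) < m then f ⟨j, h⟩ else 0) = ∑ i : Fin m, f i := by
  have h1 : (∑ j : Fin n, if h : (j : ℕ) < m then f ⟨j, h⟩ else 0)
      = ∑ j ∈ Finset.range n, (if h : j < m then f ⟨j, h⟩ else 0) :=
    Fin.sum_univ_eq_sum_range (fun j => if h : j < m then f ⟨j, h⟩ else 0) n
  have h2 : (∑ j ∈ Finset.range n, if h : j < m then f ⟨j, h⟩ else 0)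
      = ∑ j ∈ Finset.range m, (if h : j < m then f ⟨j, h⟩ else 0) := by
    refine (Finset.sum_subset (Finset.range_subset_range.2 hmn) ?_).symm
    intro j _ hj
    rw [Finset.mem_range] at hj
    rw [dif_neg hj]
  have h3 : (∑ j ∈ Finset.range m, if h : j < m then f ⟨j, h⟩ else 0) = ∑ i : Fin m, f i := by
    rw [← Fin.sum_univ_eq_sum_range (fun j => if h : j < m then f ⟨j, h⟩ else 0) m]
    exact Finset.sum_congr rfl fun i _ => by rw [dif_pos i.isLt]
  rw [h1, h2, h3]

lemma isCompact_convexHull_of_isCompact {E : Type*} [NormedAddCommGroup E] [NormedSpace ℝ E]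
    [FiniteDimensional ℝ E] {s : Set E} (hs : IsCompact s) : IsCompact (convexHull ℝ s) := by
  rcases s.eq_empty_or_nonempty with rfl | hne
  · simp
  set n := Module.finrank ℝ E + 1 with hn
  have hT : IsCompact ((stdSimplex ℝ (Fin n)) ×ˢ (Set.pi Set.univ fun _ : Fin n => s)) :=
    (isCompact_stdSimplex _ _).prod (isCompact_univ_pi fun _ => hs)
  have hcont : Continuous (fun p : (Fin n → ℝ) × (Fin n → E) => ∑ i, p.1 i • p.2 i) := by
    exact continuous_finset_sum _ fun i _ =>
      ((continuous_apply i).comp continuous_fst).smul ((continuous_apply i).comp continuous_snd)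
  have himg : (fun p : (Fin n → ℝ) × (Fin n → E) => ∑ i, p.1 i • p.2 i) ''
      ((stdSimplex ℝ (Fin n)) ×ˢ (Set.pi Set.univ fun _ : Fin n => s)) = convexHull ℝ s := by
    apply Subset.antisymm
    · rintro x ⟨⟨w, g⟩, ⟨hw, hg⟩, rfl⟩
      exact mem_convexHull_of_exists_fintype w g hw.1 hw.2 (fun i => hg i trivial) rfl
    · intro x hx
      rw [convexHull_eq_union] at hx
      simp only [Set.mem_iUnion] at hx
      obtain ⟨t, hts, hai, hxt⟩ := hx
      have htne : t.Nonempty := Finset.coe_nonempty.mp (convexHull_nonempty_iff.mp ⟨x, hxt⟩)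
      have hm0 : 0 < t.card := Finset.card_pos.mpr htne
      have hmn : t.card ≤ n := by
        have h1 : Fintype.card (↑t : Set E) ≤
            Module.finrank ℝ (vectorSpan ℝ (Set.range ((↑) : (↑t : Set E) → E))) + 1 :=
          hai.card_le_finrank_succ
        have h2 : Module.finrank ℝ (vectorSpan ℝ (Set.range ((↑) : (↑t : Set E) → E)))
            ≤ Module.finrank ℝ E := Submodule.finrank_le _
        calc t.card = Fintype.card (↑t : Set E) := (Fintype.card_coe t).symm
          _ ≤ _ := h1
          _ ≤ n := by omega
      rw [Finset.convexHull_eq] at hxt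
      obtain ⟨w, hw0, hw1, hwx⟩ := hxt
      rw [t.centerMass_eq_of_sum_1 _ hw1] at hwx
      set m := t.card with hm
      set u : Fin m → E := fun i => ((t.equivFin.symm i : t) : E) with hu
      have husumR : ∀ F : E → ℝ, ∑ i : Fin m, F (u i) = ∑ y ∈ t, F y := by
        intro F
        rw [← Finset.sum_coe_sort t F]
        exact Equiv.sum_comp t.equivFin.symm (fun a : t => F a)
      have husumE : ∀ F : E → E, ∑ i : Fin m, F (u i) = ∑ y ∈ t, F y := by
        intro F
        rw [← Finset.sum_coe_sort t F]
        exact Equiv.sum_comp t.equivFin.symm (fun a : t => F a)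
      have humem : ∀ i, u i ∈ s := fun i => hts (t.equivFin.symm i).2
      refine ⟨(fun j : Fin n => if h : (j : ℕ) < m then w (u ⟨j, h⟩) else 0,
        fun j : Fin n => if h : (j : ℕ) < m then u ⟨j, h⟩ else u ⟨0, hm0⟩), ⟨?_, ?_⟩, ?_⟩
      · constructor
        · intro j
          dsimp only
          split_ifs with h
          · exact hw0 _ (t.equivFin.symm ⟨(j : ℕ), h⟩).2
          · exact le_refl 0
        · rw [sum_pad m n hmn (fun i => w (u i))]
          rw [husumR w]
          exact hw1
      · intro j _
        dsimp only
        split_ifs <;> exact humem _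
      · dsimp only
        have : (∑ j : Fin n, (if h : (j : ℕ) < m then w (u ⟨j, h⟩) else 0) •
            (if h : (j : ℕ) < m then u ⟨j, h⟩ else u ⟨0, hm0⟩))
            = ∑ j : Fin n, (if h : (j : ℕ) < m then w (u ⟨j, h⟩) • u ⟨j, h⟩ else 0) := by
          refine Finset.sum_congr rfl fun j _ => ?_
          by_cases h : (j : ℕ) < m
          · simp only [dif_pos h]
          · simp only [dif_neg h, zero_smul]
        rw [this, sum_pad m n hmn (fun i => w (u i) • u i), husumE (fun y => w y • y)]
        simpa using hwx
  rw [← himg]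
  exact hT.image hcont
/-- the reduced flow map `F̃(x) = closure (convexHull {f : f ∈ F_x(x,z),
z ∈ M(x)})` satisfies the Basic Conditions relative to the closed set `C_x`: for
each `x ∈ C_x` it is nonempty, compact, convex and equals the convex hull of
`S(x) = ⋃_{z ∈ M(x)} F_x(x,z)`; moreover `F̃` is locally bounded and its graph
restricted to `C_x` is closed. -/
theorem reduced_flow_map_basic_conditions
    (n1 n2 : ℕ)
    (Cx : Set (EuclideanSpace ℝ (Fin n1))) (hCx : IsClosed Cx)
    (M : EuclideanSpace ℝ (Fin n1) → Set (EuclideanSpace ℝ (Fin n2)))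
    (hM_lb : ∀ K : Set (EuclideanSpace ℝ (Fin n1)), Bornology.IsBounded K →
      Bornology.IsBounded (⋃ x ∈ K, M x))
    (hM_graph : IsClosed {p : EuclideanSpace ℝ (Fin n1) × EuclideanSpace ℝ (Fin n2) |
      p.2 ∈ M p.1})
    (hM_ne : ∀ x ∈ Cx, (M x).Nonempty)
    (Fx : EuclideanSpace ℝ (Fin n1) × EuclideanSpace ℝ (Fin n2) →
      Set (EuclideanSpace ℝ (Fin n1)))
    (hFx_lb : ∀ K : Set (EuclideanSpace ℝ (Fin n1) × EuclideanSpace ℝ (Fin n2)),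
      Bornology.IsBounded K → Bornology.IsBounded (⋃ y ∈ K, Fx y))
    (hFx_graph : IsClosed {p : (EuclideanSpace ℝ (Fin n1) × EuclideanSpace ℝ (Fin n2)) ×
      EuclideanSpace ℝ (Fin n1) | p.2 ∈ Fx p.1})
    (hFx_ne : ∀ y, (Fx y).Nonempty) :
    (∀ x ∈ Cx,
      (closure (convexHull ℝ {f | ∃ z ∈ M x, f ∈ Fx (x, z)})).Nonempty ∧
      IsCompact (closure (convexHull ℝ {f | ∃ z ∈ M x, f ∈ Fx (x, z)})) ∧
      Convex ℝ (closure (convexHull ℝ {f | ∃ z ∈ M x, f ∈ Fx (x, z)})) ∧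
      closure (convexHull ℝ {f | ∃ z ∈ M x, f ∈ Fx (x, z)})
        = convexHull ℝ {f | ∃ z ∈ M x, f ∈ Fx (x, z)}) ∧
    (∀ K : Set (EuclideanSpace ℝ (Fin n1)), Bornology.IsBounded K →
      Bornology.IsBounded
        (⋃ x ∈ K, closure (convexHull ℝ {f | ∃ z ∈ M x, f ∈ Fx (x, z)}))) ∧
    IsClosed {p : EuclideanSpace ℝ (Fin n1) × EuclideanSpace ℝ (Fin n1) |
      p.1 ∈ Cx ∧ p.2 ∈ closure (convexHull ℝ {f | ∃ z ∈ M p.1, f ∈ Fx (p.1, z)})} := by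
  -- abbreviations
  have hMx_bdd : ∀ x, IsBounded (M x) := by
    intro x
    have := hM_lb {x} isBounded_singleton
    simpa using this
  -- S x is compact for every x
  have hS_cpt : ∀ x, IsCompact {f | ∃ z ∈ M x, f ∈ Fx (x, z)} := by
    intro x
    have hWclosed : IsClosed {p : EuclideanSpace ℝ (Fin n2) × EuclideanSpace ℝ (Fin n1) |
        p.1 ∈ M x ∧ p.2 ∈ Fx (x, p.1)} := by
      have h1 : IsClosed {p : EuclideanSpace ℝ (Fin n2) × EuclideanSpace ℝ (Fin n1) |
          p.1 ∈ M x} :=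
        hM_graph.preimage (Continuous.prodMk continuous_const continuous_fst)
      have h2 : IsClosed {p : EuclideanSpace ℝ (Fin n2) × EuclideanSpace ℝ (Fin n1) |
          p.2 ∈ Fx (x, p.1)} :=
        hFx_graph.preimage ((Continuous.prodMk continuous_const continuous_fst).prodMk
          continuous_snd)
      exact h1.inter h2
    have hWbdd : IsBounded {p : EuclideanSpace ℝ (Fin n2) × EuclideanSpace ℝ (Fin n1) |
        p.1 ∈ M x ∧ p.2 ∈ Fx (x, p.1)} := by
      have hB : IsBounded (⋃ y ∈ ({x} ×ˢ M x), Fx y) :=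
        hFx_lb _ (isBounded_singleton.prod (hMx_bdd x))
      refine ((hMx_bdd x).prod hB).subset ?_
      rintro ⟨z, f⟩ ⟨hz, hf⟩
      exact ⟨hz, Set.mem_biUnion (Set.mk_mem_prod rfl hz) hf⟩
    have hWcpt := Metric.isCompact_of_isClosed_isBounded hWclosed hWbdd
    have himg : Prod.snd '' {p : EuclideanSpace ℝ (Fin n2) × EuclideanSpace ℝ (Fin n1) |
        p.1 ∈ M x ∧ p.2 ∈ Fx (x, p.1)} = {f | ∃ z ∈ M x, f ∈ Fx (x, z)} := by
      ext f
      constructor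
      · rintro ⟨⟨z, f'⟩, ⟨hz, hf⟩, rfl⟩
        exact ⟨z, hz, hf⟩
      · rintro ⟨z, hz, hf⟩
        exact ⟨(z, f), ⟨hz, hf⟩, rfl⟩
    rw [← himg]
    exact hWcpt.image continuous_snd
  have hhull : ∀ x, IsCompact (convexHull ℝ {f | ∃ z ∈ M x, f ∈ Fx (x, z)}) :=
    fun x => isCompact_convexHull_of_isCompact (hS_cpt x)
  have hcl : ∀ x, closure (convexHull ℝ {f | ∃ z ∈ M x, f ∈ Fx (x, z)})
      = convexHull ℝ {f | ∃ z ∈ M x, f ∈ Fx (x, z)} :=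
    fun x => (hhull x).isClosed.closure_eq
  refine ⟨?_, ?_, ?_⟩
  · -- pointwise properties on Cx
    intro x hx
    refine ⟨?_, ?_, ?_, hcl x⟩
    · obtain ⟨z, hz⟩ := hM_ne x hx
      obtain ⟨f, hf⟩ := hFx_ne (x, z)
      exact ⟨f, subset_closure (subset_convexHull ℝ _ ⟨z, hz, hf⟩)⟩
    · rw [hcl x]; exact hhull x
    · exact (convex_convexHull ℝ _).closure
  · -- local boundedness
    intro K hK
    have hZ : IsBounded (⋃ x ∈ K, M x) := hM_lb K hK
    have hB : IsBounded (⋃ y ∈ K ×ˢ (⋃ x ∈ K, M x), Fx y) := hFx_lb _ (hK.prod hZ)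
    have hSB : ∀ x ∈ K, {f | ∃ z ∈ M x, f ∈ Fx (x, z)} ⊆ ⋃ y ∈ K ×ˢ (⋃ x ∈ K, M x), Fx y := by
      rintro x hxK f ⟨z, hz, hf⟩
      exact Set.mem_biUnion (Set.mk_mem_prod hxK (Set.mem_biUnion hxK hz)) hf
    have hBig : IsBounded (closure (convexHull ℝ (⋃ y ∈ K ×ˢ (⋃ x ∈ K, M x), Fx y))) :=
      (isBounded_convexHull.mpr hB).closure
    refine hBig.subset ?_
    refine Set.iUnion₂_subset fun x hx => ?_
    exact closure_mono (convexHull_mono (hSB x hx))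
  · -- closed graph
    apply IsSeqClosed.isClosed
    intro q p hq hlim
    have hx1 : Tendsto (fun n => (q n).1) atTop (nhds p.1) :=
      (continuous_fst.tendsto p).comp hlim
    have hx2 : Tendsto (fun n => (q n).2) atTop (nhds p.2) :=
      (continuous_snd.tendsto p).comp hlim
    have hpC : p.1 ∈ Cx := hCx.mem_of_tendsto hx1 (Eventually.of_forall fun n => (hq n).1)
    refine ⟨hpC, ?_⟩
    rw [Metric.mem_closure_iff]
    intro ε hε
    have hε2 : 0 < ε / 2 := by linarith
    -- eventual inclusion of S (x n) in the thickening of S p.1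
    have key : ∀ᶠ n in atTop, {f | ∃ z ∈ M (q n).1, f ∈ Fx ((q n).1, z)} ⊆
        thickening (ε / 2) {f | ∃ z ∈ M p.1, f ∈ Fx (p.1, z)} := by
      by_contra hcon
      rw [Filter.not_eventually] at hcon
      obtain ⟨φ, hφ, hφP⟩ := Filter.extraction_of_frequently_atTop hcon
      choose g hgS hgT using fun k => Set.not_subset.mp (hφP k)
      choose z hz hgz using hgS
      have hXb : IsBounded (Set.range fun n => (q n).1) :=
        isBounded_range_of_tendsto _ hx1
      have hZb : IsBounded (⋃ x ∈ Set.range fun n => (q n).1, M x) := hM_lb _ hXb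
      have hGb : IsBounded (⋃ y ∈ (Set.range fun n => (q n).1) ×ˢ
          (⋃ x ∈ Set.range fun n => (q n).1, M x), Fx y) := hFx_lb _ (hXb.prod hZb)
      have hzg : ∀ k, (z k, g k) ∈ (⋃ x ∈ Set.range fun n => (q n).1, M x) ×ˢ
          (⋃ y ∈ (Set.range fun n => (q n).1) ×ˢ
            (⋃ x ∈ Set.range fun n => (q n).1, M x), Fx y) := by
        intro k
        have h1 : z k ∈ ⋃ x ∈ Set.range fun n => (q n).1, M x :=
          Set.mem_biUnion ⟨φ k, rfl⟩ (hz k)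
        exact ⟨h1, Set.mem_biUnion (Set.mk_mem_prod ⟨φ k, rfl⟩ h1) (hgz k)⟩
      obtain ⟨⟨z0, g0⟩, -, ψ, hψ, hψlim⟩ := tendsto_subseq_of_bounded (hZb.prod hGb) hzg
      have hψat : Tendsto (fun k => φ (ψ k)) atTop atTop := (hφ.comp hψ).tendsto_atTop
      have hxk : Tendsto (fun k => (q (φ (ψ k))).1) atTop (nhds p.1) := hx1.comp hψat
      have hztend : Tendsto (fun k => z (ψ k)) atTop (nhds z0) :=
        (continuous_fst.tendsto _).comp hψlim
      have hgtend : Tendsto (fun k => g (ψ k)) atTop (nhds g0) :=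
        (continuous_snd.tendsto _).comp hψlim
      have hz0 : z0 ∈ M p.1 := by
        have : Tendsto (fun k => ((q (φ (ψ k))).1, z (ψ k))) atTop (nhds (p.1, z0)) :=
          hxk.prodMk_nhds hztend
        exact hM_graph.mem_of_tendsto this (Eventually.of_forall fun k => hz (ψ k))
      have hg0 : g0 ∈ Fx (p.1, z0) := by
        have : Tendsto (fun k => (((q (φ (ψ k))).1, z (ψ k)), g (ψ k))) atTop
            (nhds ((p.1, z0), g0)) := (hxk.prodMk_nhds hztend).prodMk_nhds hgtend
        exact hFx_graph.mem_of_tendsto this (Eventually.of_forall fun k => hgz (ψ k))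
      have hin : g0 ∈ thickening (ε / 2) {f | ∃ z ∈ M p.1, f ∈ Fx (p.1, z)} :=
        self_subset_thickening hε2 _ ⟨z0, hz0, hg0⟩
      have hout : g0 ∉ thickening (ε / 2) {f | ∃ z ∈ M p.1, f ∈ Fx (p.1, z)} := by
        have hclosedc : IsClosed
            (thickening (ε / 2) {f | ∃ z ∈ M p.1, f ∈ Fx (p.1, z)})ᶜ :=
          isOpen_thickening.isClosed_compl
        exact hclosedc.mem_of_tendsto hgtend (Eventually.of_forall fun k => hgT (ψ k))
      exact hout hin
    have hev2 : ∀ᶠ n in atTop, dist p.2 ((q n).2) < ε / 2 := by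
      have := hx2 (Metric.ball_mem_nhds p.2 hε2)
      filter_upwards [this] with n hn
      simp only [Set.mem_preimage, Metric.mem_ball] at hn
      rw [dist_comm]
      exact hn
    obtain ⟨n, hn1, hn2⟩ := (key.and hev2).exists
    have hfn : (q n).2 ∈ convexHull ℝ {f | ∃ z ∈ M (q n).1, f ∈ Fx ((q n).1, z)} := by
      have := (hq n).2
      rwa [hcl (q n).1] at this
    have hsubset : convexHull ℝ {f | ∃ z ∈ M (q n).1, f ∈ Fx ((q n).1, z)} ⊆
        thickening (ε / 2) (convexHull ℝ {f | ∃ z ∈ M p.1, f ∈ Fx (p.1, z)}) := by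
      apply convexHull_min
      · exact hn1.trans (thickening_subset_of_subset _ (subset_convexHull ℝ _))
      · exact (convex_convexHull ℝ _).thickening _
    obtain ⟨b, hb, hdb⟩ := Metric.mem_thickening_iff.mp (hsubset hfn)
    exact ⟨b, hb, by
      calc dist p.2 b ≤ dist p.2 ((q n).2) + dist ((q n).2) b := dist_triangle _ _ _
        _ < ε / 2 + ε / 2 := add_lt_add hn2 hdb
        _ = ε := by ring⟩
end

section
/- Let k_x, k_z, k_1, k_2, k_3, μ_F > 0, set θ* := k_3/(k_1 + k_3) and ε* := k_x·k_z/(k_1·k_3 + k_x·k_2), and let O ⊆ ℝ^{n1} be any set. Then for every ε ∈ (0, ε*) there exists λ > 0 such that for all a, b ≥ 0 and all x ∈ ℝ^{n1}: (1 − θ*)·(−k_x·a² + μ_F·𝟙_O(x) + k_3·a·b) + θ*·(k_1·a·b + k_2·b² − (k_z/ε)·b²) ≤ −λ·(a² + b²) + μ_F·𝟙_O(x), where 𝟙_O is the indicator function of O (equal to 1 on O and 0 elsewhere). -/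
set_option maxHeartbeats 1600000 in
/-- recurrence variant of the composite quadratic-form estimate: with
`θ* = k₃/(k₁+k₃)` and `ε* = kₓk_z/(k₁k₃ + kₓk₂)`, for every `ε ∈ (0, ε*)` there is
`λ > 0` such that for all `a, b ≥ 0` and all `x`,
`(1-θ*)(-kₓ a² + μ_F 𝟙_O(x) + k₃ a b) + θ*(k₁ a b + k₂ b² - (k_z/ε) b²)
  ≤ -λ (a² + b²) + μ_F 𝟙_O(x)`. -/
theorem composite_quadratic_estimate_recurrence
    (n1 : ℕ)
    (kx kz k1 k2 k3 μF : ℝ)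
    (hkx : 0 < kx) (hkz : 0 < kz) (hk1 : 0 < k1) (hk2 : 0 < k2) (hk3 : 0 < k3)
    (hμF : 0 < μF)
    (O : Set (EuclideanSpace ℝ (Fin n1))) :
    ∀ ε : ℝ, 0 < ε → ε < kx * kz / (k1 * k3 + kx * k2) →
      ∃ lam : ℝ, 0 < lam ∧ ∀ (a b : ℝ) (x : EuclideanSpace ℝ (Fin n1)),
        0 ≤ a → 0 ≤ b →
        (1 - k3 / (k1 + k3)) * (-(kx * a ^ 2) + μF * O.indicator 1 x + k3 * a * b)
          + (k3 / (k1 + k3)) * (k1 * a * b + k2 * b ^ 2 - (kz / ε) * b ^ 2)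
        ≤ -lam * (a ^ 2 + b ^ 2) + μF * O.indicator 1 x := by
  intro ε hε hεlt
  have hs : (0:ℝ) < k1 + k3 := by linarith
  have hden : (0:ℝ) < k1 * k3 + kx * k2 := by positivity
  have h1 : ε * (k1 * k3 + kx * k2) < kx * kz := by
    rw [div_eq_mul_inv] at hεlt
    have := (lt_div_iff₀ hden).mp (by rwa [div_eq_mul_inv])
    linarith
  have hD : k1 * k3 < kx * (kz / ε - k2) := by
    have h2 : k1 * k3 + kx * k2 < kx * kz / ε := by
      rw [lt_div_iff₀ hε]; nlinarith
    have h3 : kx * (kz / ε - k2) = kx * kz / ε - kx * k2 := by ring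
    linarith [h2, h3]
  set D := kz / ε - k2 with hDdef
  have hDpos : 0 < D := by nlinarith
  set A := k1 * kx / (k1 + k3) with hAdef
  set B := k3 * D / (k1 + k3) with hBdef
  set C := k1 * k3 / (k1 + k3) with hCdef
  have hA : 0 < A := by positivity
  have hB : 0 < B := by positivity
  have hC : 0 < C := by positivity
  have hABC : C ^ 2 < A * B := by
    rw [hAdef, hBdef, hCdef, div_pow, div_mul_div_comm, div_lt_div_iff₀ (by positivity) (by positivity)]
    have := mul_lt_mul_of_pos_left hD (show (0:ℝ) < k1 * k3 * (k1 + k3) ^ 2 by positivity)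
    nlinarith [this]
  have hABpos : 0 < A + B := by linarith
  refine ⟨(A * B - C ^ 2) / (A + B), div_pos (by linarith) hABpos, ?_⟩
  set lam := (A * B - C ^ 2) / (A + B) with hlamdef
  have hlamAB : lam * (A + B) = A * B - C ^ 2 := div_mul_cancel₀ _ (ne_of_gt hABpos)
  intro a b x ha hb
  set I : ℝ := O.indicator 1 x with hIdef
  have hI : (0:ℝ) ≤ I := Set.indicator_nonneg (fun _ _ => zero_le_one) x
  have key2 : 0 ≤ (A^2 + C^2) * a^2 - 2*C*(A+B)*(a*b) + (B^2 + C^2) * b^2 := by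
    nlinarith [sq_nonneg (A*a - C*b), sq_nonneg (C*a - B*b)]
  have key : -A*a^2 + 2*C*(a*b) - B*b^2 ≤ -lam*(a^2+b^2) := by
    nlinarith [key2, hlamAB, hABpos]
  have heq : (1 - k3 / (k1 + k3)) * (-(kx * a ^ 2) + μF * I + k3 * a * b)
          + (k3 / (k1 + k3)) * (k1 * a * b + k2 * b ^ 2 - (kz / ε) * b ^ 2)
      = -A*a^2 + 2*C*(a*b) - B*b^2 + (k1/(k1+k3)) * (μF * I) := by
    have hθ : 1 - k3 / (k1 + k3) = k1 / (k1 + k3) := by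
      rw [eq_div_iff (ne_of_gt hs), sub_mul, div_mul_cancel₀ _ (ne_of_gt hs)]
      ring
    rw [hθ, hAdef, hBdef, hCdef, hDdef]
    ring
  have hfrac : k1/(k1+k3) ≤ 1 := by rw [div_le_one hs]; linarith
  have hμI : 0 ≤ μF * I := mul_nonneg hμF.le hI
  have hind : (k1/(k1+k3)) * (μF * I) ≤ μF * I := by nlinarith [div_pos hk1 hs]
  rw [heq]
  linarith
end
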